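/- Let G be a nonabelian group of order 18 isomorphic to (C₃ × C₃) ⋊ C₂ with C₂ acting by inversion. Then the Schur multiplier H²(G, ℂˣ) of G is isomorphic to ℤ/3ℤ. -/

import Mathlib

/-- The group of 2-cocycles on `G` with values in `ℂˣ` (trivial action). -/
def twoCocycles (G : Type*) [Group G] : Subgroup (G → G → ℂˣ) where
  carrier := {f | ∀ g h k, f g h * f (g * h) k = f g (h * k) * f h k}
  one_mem' := by intro g h k; simp
  mul_mem' := by
    intro f₁ f₂ h1 h2 g h k
    simp only [Pi.mul_apply]
    rw [mul_mul_mul_comm, h1 g h k, h2 g h k, mul_mul_mul_comm]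
  inv_mem' := by
    intro f hf g h k
    simp only [Pi.inv_apply]
    rw [← mul_inv, hf g h k, mul_inv]

/-- The group of 2-coboundaries on `G` with values in `ℂˣ` (trivial action). -/
def twoCoboundaries (G : Type*) [Group G] : Subgroup (G → G → ℂˣ) where
  carrier := {f | ∃ c : G → ℂˣ, ∀ g h, f g h = c g * c h * (c (g * h))⁻¹}
  one_mem' := ⟨fun _ => 1, by simp⟩
  mul_mem' := by
    rintro f₁ f₂ ⟨c₁, h1⟩ ⟨c₂, h2⟩
    refine ⟨c₁ * c₂, fun g h => ?_⟩
    simp only [Pi.mul_apply, h1 g h, h2 g h, mul_inv]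
    simp [mul_assoc, mul_comm, mul_left_comm]
  inv_mem' := by
    rintro f ⟨c, hc⟩
    refine ⟨c⁻¹, fun g h => ?_⟩
    simp only [Pi.inv_apply, hc g h, mul_inv, inv_inv]

/-- The Schur multiplier `H²(G, ℂˣ)` (with trivial `G`-action on `ℂˣ`):
2-cocycles modulo 2-coboundaries. -/
def schurMultiplier (G : Type*) [Group G] :=
  twoCocycles G ⧸ ((twoCoboundaries G).subgroupOf (twoCocycles G))

instance (G : Type*) [Group G] : CommGroup (schurMultiplier G) :=
  QuotientGroup.Quotient.commGroup _

abbrev C3 := Multiplicative (ZMod 3)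
abbrev C2 := Multiplicative (ZMod 2)

namespace SMaux

variable {G H : Type*} [Group G] [Group H]

theorem mem_twoCocycles_iff {f : G → G → ℂˣ} :
    f ∈ twoCocycles G ↔ ∀ g h k, f g h * f (g * h) k = f g (h * k) * f h k := Iff.rfl

theorem mem_twoCoboundaries_iff {f : G → G → ℂˣ} :
    f ∈ twoCoboundaries G ↔ ∃ c : G → ℂˣ, ∀ g h, f g h = c g * c h * (c (g * h))⁻¹ := Iff.rfl

theorem cocycle_one_right {f : G → G → ℂˣ} (hf : f ∈ twoCocycles G) (g : G) :
    f g 1 = f 1 1 := by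
  have := hf g 1 1
  simp only [mul_one, one_mul] at this
  exact mul_left_cancel this

theorem cocycle_one_left {f : G → G → ℂˣ} (hf : f ∈ twoCocycles G) (g : G) :
    f 1 g = f 1 1 := by
  have := hf 1 1 g
  simp only [mul_one, one_mul] at this
  exact (mul_right_cancel this).symm

/-- The commutator pairing attached to a 2-cocycle. -/
def pairB (f : G → G → ℂˣ) (g h : G) : ℂˣ := f g h * (f h g)⁻¹

theorem pairB_one_right {f : G → G → ℂˣ} (hf : f ∈ twoCocycles G) (g : G) :
    pairB f g 1 = 1 := by
  rw [pairB, cocycle_one_right hf g, cocycle_one_left hf g, mul_inv_cancel]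

theorem pairB_mul_right {f : G → G → ℂˣ} (hf : f ∈ twoCocycles G) {g h k : G}
    (hgh : g * h = h * g) (hgk : g * k = k * g) :
    pairB f g (h * k) = pairB f g h * pairB f g k := by
  have e1 := congrArg (Units.val) (hf g h k)
  have e2 := congrArg (Units.val) (hf h k g)
  have e3 := congrArg (Units.val) (hf h g k)
  rw [← hgh, hgk] at e3
  simp only [Units.val_mul] at e1 e2 e3
  have key : f g (h * k) * f h g * f k g * f h k
      = f g h * f g k * f (h * k) g * f h k := by
    apply Units.ext
    simp only [Units.val_mul]
    linear_combination (-((f h g : ℂ) * (f k g : ℂ))) * e1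
      - ((f g h : ℂ) * (f g k : ℂ)) * e2 + ((f g h : ℂ) * (f k g : ℂ)) * e3
  have key2 := mul_right_cancel key
  rw [pairB, pairB, pairB]
  apply Units.ext
  simp only [Units.val_mul, Units.val_inv_eq_inv_val]
  field_simp
  have key2c := congrArg Units.val key2
  simp only [Units.val_mul] at key2c
  linear_combination key2c

theorem pairB_pow_right {f : G → G → ℂˣ} (hf : f ∈ twoCocycles G) {g h : G}
    (hgh : Commute g h) (n : ℕ) : pairB f g (h ^ n) = pairB f g h ^ n := by
  induction n with
  | zero => simpa using pairB_one_right hf g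
  | succ n ih =>
      rw [pow_succ, pairB_mul_right hf ((hgh.pow_right n)) hgh, ih, pow_succ]

theorem pairB_coboundary {f : G → G → ℂˣ} (hf : f ∈ twoCoboundaries G) {g h : G}
    (hgh : g * h = h * g) : pairB f g h = 1 := by
  obtain ⟨c, hc⟩ := hf
  rw [pairB, hc, hc, hgh]
  apply Units.ext
  simp only [Units.val_mul, Units.val_inv_eq_inv_val, Units.val_one]
  field_simp

end SMaux
namespace SMaux

variable {G : Type*} [Group G]

/-- A normalized 2-cocycle. -/
structure NormCocycle (G : Type*) [Group G] where
  f : G → G → ℂˣ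
  cocycle : ∀ g h k, f g h * f (g * h) k = f g (h * k) * f h k
  norm_left : ∀ g, f 1 g = 1
  norm_right : ∀ g, f g 1 = 1

/-- The central extension of `G` by `ℂˣ` attached to a normalized cocycle. -/
@[ext] structure CExt (c : NormCocycle G) where
  u : ℂˣ
  x : G

variable {c : NormCocycle G}

theorem NormCocycle.symm_inv (c : NormCocycle G) (g : G) : c.f g⁻¹ g = c.f g g⁻¹ := by
  have := c.cocycle g g⁻¹ g
  simp only [mul_inv_cancel, inv_mul_cancel, c.norm_left, c.norm_right, one_mul, mul_one] at this
  exact this.symm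

instance : Group (CExt c) where
  mul a b := ⟨a.u * b.u * c.f a.x b.x, a.x * b.x⟩
  one := ⟨1, 1⟩
  inv a := ⟨(a.u * c.f a.x a.x⁻¹)⁻¹, a.x⁻¹⟩
  mul_assoc a b d := by
    have hc := congrArg Units.val (c.cocycle a.x b.x d.x)
    simp only [Units.val_mul] at hc
    ext
    · show ((a.u * b.u * c.f a.x b.x) * d.u * c.f (a.x * b.x) d.x : ℂˣ).val
        = (a.u * (b.u * d.u * c.f b.x d.x) * c.f a.x (b.x * d.x)).val
      simp only [Units.val_mul]
      linear_combination (a.u : ℂ) * (b.u : ℂ) * (d.u : ℂ) * hc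
    · exact mul_assoc a.x b.x d.x
  one_mul a := by
    ext
    · show ((1 : ℂˣ) * a.u * c.f 1 a.x).val = a.u.val
      rw [c.norm_left, one_mul, mul_one]
    · exact one_mul a.x
  mul_one a := by
    ext
    · show (a.u * 1 * c.f a.x 1).val = a.u.val
      rw [c.norm_right, mul_one, mul_one]
    · exact mul_one a.x
  inv_mul_cancel a := by
    ext
    · have h1 : ((a.u * c.f a.x a.x⁻¹)⁻¹ * a.u * c.f a.x⁻¹ a.x) = (1 : ℂˣ) := by
        rw [c.symm_inv]; group
      exact congrArg Units.val h1
    · exact inv_mul_cancel a.x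

theorem CExt.mul_def (a b : CExt c) : a * b = ⟨a.u * b.u * c.f a.x b.x, a.x * b.x⟩ := rfl
theorem CExt.one_def : (1 : CExt c) = ⟨1, 1⟩ := rfl

/-- Projection to `G` as a group hom. -/
def CExt.proj (c : NormCocycle G) : CExt c →* G where
  toFun a := a.x
  map_one' := rfl
  map_mul' _ _ := rfl

/-- The central embedding of `ℂˣ`. -/
def CExt.nu (c : NormCocycle G) : ℂˣ →* CExt c where
  toFun w := ⟨w, 1⟩
  map_one' := rfl
  map_mul' w v := by
    ext
    · show (w * v : ℂˣ).val = (w * v * c.f 1 1).val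
      rw [c.norm_left, mul_one]
    · exact (one_mul (1:G)).symm

theorem CExt.nu_central (w : ℂˣ) (e : CExt c) : CExt.nu c w * e = e * CExt.nu c w := by
  ext
  · show (w * e.u * c.f 1 e.x).val = (e.u * w * c.f e.x 1).val
    rw [c.norm_left, c.norm_right, mul_one, mul_one, mul_comm]
  · show 1 * e.x = e.x * 1
    rw [one_mul, mul_one]

theorem CExt.nu_commute (w : ℂˣ) (e : CExt c) : Commute (CExt.nu c w) e :=
  CExt.nu_central w e

theorem CExt.eq_nu_of_x_eq_one {e : CExt c} (h : e.x = 1) : e = CExt.nu c e.u := by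
  ext
  · rfl
  · exact h

theorem CExt.nu_inj : Function.Injective (CExt.nu c) := fun w v h => congrArg CExt.u h

/-- Every unit has an `n`-th root. -/
theorem exists_units_pow (n : ℕ) (hn : 0 < n) (u : ℂˣ) : ∃ v : ℂˣ, v ^ n = u := by
  obtain ⟨z, hz⟩ := IsAlgClosed.exists_pow_nat_eq (u : ℂ) hn
  have hz0 : z ≠ 0 := by
    intro h
    rw [h, zero_pow hn.ne'] at hz
    exact u.ne_zero hz.symm
  exact ⟨Units.mk0 z hz0, Units.ext (by simpa using hz)⟩

/-- Lift an element of order dividing `n` to an element of order dividing `n`. -/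
theorem exists_lift_pow_eq_one (c : NormCocycle G) {g : G} {n : ℕ} (hn : 0 < n)
    (hg : g ^ n = 1) : ∃ e : CExt c, e.x = g ∧ e ^ n = 1 ∧ ∃ w : ℂˣ, e = CExt.nu c w * ⟨1, g⟩ := by
  set e₀ : CExt c := ⟨1, g⟩ with he₀
  have hx : (e₀ ^ n).x = 1 := by
    have := (CExt.proj c).map_pow e₀ n
    simp only [CExt.proj, MonoidHom.coe_mk, OneHom.coe_mk] at this
    rw [this]; exact hg
  obtain ⟨w₀, hE⟩ : ∃ w₀, e₀ ^ n = CExt.nu c w₀ := ⟨_, CExt.eq_nu_of_x_eq_one hx⟩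
  obtain ⟨v, hv⟩ := exists_units_pow n hn w₀⁻¹
  refine ⟨CExt.nu c v * e₀, ?_, ?_, v, rfl⟩
  · show 1 * g = g; exact one_mul g
  · rw [(CExt.nu_commute v e₀).mul_pow, ← map_pow, hv, hE, ← map_mul,
      inv_mul_cancel, map_one]

end SMaux
namespace SMaux

variable {G : Type*} [Group G] {c : NormCocycle G}

/-- Adjust a lift of order dividing 3 by a central element so it is genuinely
inverted by conjugation by `t'`. -/
theorem exists_adjust (c : NormCocycle G) (t' a' : CExt c) (ha3 : a' ^ 3 = 1)
    (hconj : (t' * a' * t'⁻¹).x = (a'.x)⁻¹) :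
    ∃ a'' : CExt c, a''.x = a'.x ∧ a'' ^ 3 = 1 ∧ t' * a'' * t'⁻¹ = a''⁻¹ ∧
      ∃ z : ℂˣ, a'' = CExt.nu c z * a' := by
  have hxz : (t' * a' * t'⁻¹ * a').x = 1 := by
    have h0 : (t' * a' * t'⁻¹ * a').x = (t' * a' * t'⁻¹).x * a'.x := rfl
    rw [h0, hconj, inv_mul_cancel]
  obtain ⟨w, hw⟩ : ∃ w, t' * a' * t'⁻¹ * a' = CExt.nu c w := ⟨_, CExt.eq_nu_of_x_eq_one hxz⟩
  have hconj' : t' * a' * t'⁻¹ = a'⁻¹ * CExt.nu c w := by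
    have h0 : t' * a' * t'⁻¹ = (CExt.nu c w) * a'⁻¹ := by rw [← hw]; group
    rw [h0, (CExt.nu_commute w a'⁻¹).eq]
  have hw3 : w ^ 3 = 1 := by
    have h1 : (t' * a' * t'⁻¹) ^ 3 = 1 := by
      rw [conj_pow, ha3, mul_one, mul_inv_cancel]
    rw [hconj', ((CExt.nu_commute w a'⁻¹).symm).mul_pow, inv_pow, ha3, inv_one, one_mul,
      ← map_pow] at h1
    exact CExt.nu_inj (h1.trans (map_one (CExt.nu c)).symm)
  have hw2 : w * w = w⁻¹ := by
    have h3 : w * w * w = 1 := by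
      have h4 := hw3
      rw [pow_succ, pow_two] at h4
      exact h4
    exact eq_inv_of_mul_eq_one_left h3
  have hcn : t' * CExt.nu c w * t'⁻¹ = CExt.nu c w := by
    rw [← CExt.nu_central w t']; group
  refine ⟨CExt.nu c w * a', one_mul a'.x, ?_, ?_, w, rfl⟩
  · rw [(CExt.nu_commute w a').mul_pow, ← map_pow, hw3, map_one, one_mul, ha3]
  · have h2 : t' * (CExt.nu c w * a') * t'⁻¹ = (t' * CExt.nu c w * t'⁻¹) * (t' * a' * t'⁻¹) := by
      group
    rw [h2, hcn, hconj', ← CExt.nu_central w a'⁻¹, ← mul_assoc, ← map_mul, hw2, map_inv,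
      mul_inv_rev, ← map_inv]
    exact CExt.nu_central w⁻¹ a'⁻¹

/-- The hom `Multiplicative (ZMod n) →* E` sending the generator to an element
whose `n`-th power is `1`. -/
def homOfPowEq {E : Type*} [Group E] (n : ℕ) [NeZero n] (x : E) (hx : x ^ n = 1) :
    Multiplicative (ZMod n) →* E where
  toFun m := x ^ (Multiplicative.toAdd m).val
  map_one' := by
    show x ^ (ZMod.val (0 : ZMod n)) = 1
    rw [ZMod.val_zero, pow_zero]
  map_mul' a b := by
    show x ^ (Multiplicative.toAdd a + Multiplicative.toAdd b).val
      = x ^ (Multiplicative.toAdd a).val * x ^ (Multiplicative.toAdd b).val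
    have hmod : ∀ k : ℕ, x ^ (k % n) = x ^ k := by
      intro k
      conv_rhs => rw [← Nat.mod_add_div k n]
      rw [pow_add, pow_mul, hx, one_pow, mul_one]
    rw [ZMod.val_add, hmod, pow_add]

theorem homOfPowEq_apply {E : Type*} [Group E] (n : ℕ) [NeZero n] (x : E) (hx : x ^ n = 1)
    (m : ZMod n) : homOfPowEq n x hx (Multiplicative.ofAdd m) = x ^ m.val := rfl

end SMaux
namespace SMaux

theorem ofAdd_one_pow {n : ℕ} [NeZero n] (v : ZMod n) :
    (Multiplicative.ofAdd (1 : ZMod n)) ^ v.val = Multiplicative.ofAdd v := by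
  apply Multiplicative.toAdd.injective
  rw [toAdd_pow]
  show v.val • (1 : ZMod n) = v
  rw [nsmul_eq_mul, mul_one]
  exact ZMod.natCast_rightInverse v

variable (φ : C2 →* MulAut (C3 × C3))

/-- The generators of `(C3 × C3) ⋊ C2`. -/
def aK : (C3 × C3) ⋊[φ] C2 := SemidirectProduct.inl (Multiplicative.ofAdd (1 : ZMod 3), 1)
def bK : (C3 × C3) ⋊[φ] C2 := SemidirectProduct.inl (1, Multiplicative.ofAdd (1 : ZMod 3))
def tK : (C3 × C3) ⋊[φ] C2 := SemidirectProduct.inr (Multiplicative.ofAdd (1 : ZMod 2))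

theorem C3sq_pow3 : ∀ m : C3 × C3, m ^ 3 = 1 := by decide

theorem aK_pow3 : aK φ ^ 3 = 1 := by
  rw [aK, ← map_pow, C3sq_pow3 _, map_one]

theorem bK_pow3 : bK φ ^ 3 = 1 := by
  rw [bK, ← map_pow, C3sq_pow3 _, map_one]

theorem tK_pow2 : tK φ ^ 2 = 1 := by
  rw [tK, ← map_pow]
  have h2 : (Multiplicative.ofAdd (1 : ZMod 2)) ^ 2 = 1 := by decide
  rw [h2, map_one]

theorem aK_mul_bK : aK φ * bK φ = bK φ * aK φ := by
  rw [aK, bK, ← map_mul, ← map_mul, mul_comm]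

theorem inl_pow_left (m : C3 × C3) :
    (SemidirectProduct.inl (φ := φ) (m.1, 1)) * (SemidirectProduct.inl (1, m.2)) =
      SemidirectProduct.inl m := by
  rw [← map_mul]
  congr 1
  exact Prod.ext (mul_one m.1) (one_mul m.2)

theorem tK_conj_inl (hφ : ∀ m : C3 × C3, φ (Multiplicative.ofAdd (1 : ZMod 2)) m = m⁻¹)
    (m : C3 × C3) :
    tK φ * SemidirectProduct.inl m * (tK φ)⁻¹ = (SemidirectProduct.inl m)⁻¹ := by
  have h := SemidirectProduct.inl_aut (φ := φ) (Multiplicative.ofAdd (1 : ZMod 2)) m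
  rw [hφ] at h
  rw [tK, ← map_inv, ← h]
  exact map_inv SemidirectProduct.inl m

theorem tK_conj_aK (hφ : ∀ m : C3 × C3, φ (Multiplicative.ofAdd (1 : ZMod 2)) m = m⁻¹) : tK φ * aK φ * (tK φ)⁻¹ = (aK φ)⁻¹ := tK_conj_inl φ hφ _
theorem tK_conj_bK (hφ : ∀ m : C3 × C3, φ (Multiplicative.ofAdd (1 : ZMod 2)) m = m⁻¹) : tK φ * bK φ * (tK φ)⁻¹ = (bK φ)⁻¹ := tK_conj_inl φ hφ _

end SMaux
set_option maxHeartbeats 1000000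

namespace SMaux

variable (φ : C2 →* MulAut (C3 × C3))

theorem exists_section
    (hφ : ∀ m : C3 × C3, φ (Multiplicative.ofAdd (1 : ZMod 2)) m = m⁻¹)
    (c₀ : NormCocycle ((C3 × C3) ⋊[φ] C2)) (a2 b2 et : CExt c₀)
    (ha2x : a2.x = aK φ) (hb2x : b2.x = bK φ) (hetx : et.x = tK φ)
    (ha23 : a2 ^ 3 = 1) (hb23 : b2 ^ 3 = 1) (het2 : et ^ 2 = 1)
    (hcomm : Commute a2 b2) (ha2conj : et * a2 * et⁻¹ = a2⁻¹)
    (hb2conj : et * b2 * et⁻¹ = b2⁻¹) :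
    ∃ s : ((C3 × C3) ⋊[φ] C2) →* CExt c₀, ∀ g, (s g).x = g := by
  let hA : (C3 × C3) →* CExt c₀ :=
    MonoidHom.noncommCoprod (homOfPowEq 3 a2 ha23) (homOfPowEq 3 b2 hb23)
      (fun m n => Commute.pow_pow hcomm _ _)
  let hT : C2 →* CExt c₀ := homOfPowEq 2 et het2
  have hAapply : ∀ m : C3 × C3,
      hA m = a2 ^ (Multiplicative.toAdd m.1).val * b2 ^ (Multiplicative.toAdd m.2).val :=
    fun m => rfl
  have hTapply : ∀ g : C2, hT g = et ^ (Multiplicative.toAdd g).val := fun g => rfl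
  have hconjA : ∀ m : C3 × C3, et * hA m * et⁻¹ = (hA m)⁻¹ := by
    intro m
    set I := (Multiplicative.toAdd m.1).val
    set J := (Multiplicative.toAdd m.2).val
    have h1 : et * (a2 ^ I * b2 ^ J) * et⁻¹ = (et * a2 * et⁻¹) ^ I * (et * b2 * et⁻¹) ^ J := by
      rw [conj_pow, conj_pow]; group
    rw [hAapply, h1, ha2conj, hb2conj, inv_pow, inv_pow, ← mul_inv_rev]
    congr 1
    exact ((hcomm.pow_pow I J).eq).symm
  have hcases : ∀ g : C2, g = 1 ∨ g = Multiplicative.ofAdd 1 := by decide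
  have compat : ∀ g : C2,
      hA.comp (φ g).toMonoidHom = (MulAut.conj (hT g)).toMonoidHom.comp hA := by
    intro g
    refine DFunLike.ext _ _ fun m => ?_
    rcases hcases g with rfl | rfl
    · show hA ((φ 1) m) = (MulAut.conj (hT 1)) (hA m)
      rw [map_one φ, map_one hT, map_one]
      rfl
    · show hA ((φ (Multiplicative.ofAdd 1)) m) = (MulAut.conj (hT (Multiplicative.ofAdd 1))) (hA m)
      have hTg : hT (Multiplicative.ofAdd 1) = et := by
        rw [hTapply]
        have h1 : ZMod.val (Multiplicative.toAdd (Multiplicative.ofAdd (1 : ZMod 2))) = 1 := rfl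
        rw [h1, pow_one]
      rw [hφ m, hTg, map_inv, MulAut.conj_apply, hconjA m]
  refine ⟨SemidirectProduct.lift hA hT compat, ?_⟩
  have hproj : (CExt.proj c₀).comp (SemidirectProduct.lift hA hT compat)
      = MonoidHom.id ((C3 × C3) ⋊[φ] C2) := by
    apply SemidirectProduct.hom_ext
    · refine DFunLike.ext _ _ fun m => ?_
      show (CExt.proj c₀) ((SemidirectProduct.lift hA hT compat) (SemidirectProduct.inl m))
        = SemidirectProduct.inl m
      rw [SemidirectProduct.lift_inl, hAapply, map_mul, map_pow, map_pow]
      have hpa : (CExt.proj c₀) a2 = aK φ := ha2x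
      have hpb : (CExt.proj c₀) b2 = bK φ := hb2x
      rw [hpa, hpb, aK, bK, ← map_pow, ← map_pow, ← map_mul]
      congr 1
      have h1 : (Multiplicative.ofAdd (1 : ZMod 3), (1 : C3)) ^ (Multiplicative.toAdd m.1).val
          = (m.1, 1) := by
        refine Prod.ext ?_ ?_
        · rw [Prod.pow_fst]; exact ofAdd_one_pow _
        · rw [Prod.pow_snd, one_pow]
      have h2 : ((1 : C3), Multiplicative.ofAdd (1 : ZMod 3)) ^ (Multiplicative.toAdd m.2).val
          = (1, m.2) := by
        refine Prod.ext ?_ ?_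
        · rw [Prod.pow_fst, one_pow]
        · rw [Prod.pow_snd]; exact ofAdd_one_pow _
      rw [h1, h2]
      exact Prod.ext (mul_one m.1) (one_mul m.2)
    · refine DFunLike.ext _ _ fun g => ?_
      show (CExt.proj c₀) ((SemidirectProduct.lift hA hT compat) (SemidirectProduct.inr g))
        = SemidirectProduct.inr g
      rw [SemidirectProduct.lift_inr, hTapply, map_pow]
      have hpt : (CExt.proj c₀) et = tK φ := hetx
      rw [hpt, tK, ← map_pow]
      congr 1
      exact ofAdd_one_pow _
  intro g
  exact DFunLike.congr_fun hproj g

theorem coboundary_of_pair_trivial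
    (hφ : ∀ m : C3 × C3, φ (Multiplicative.ofAdd (1 : ZMod 2)) m = m⁻¹)
    {f : ((C3 × C3) ⋊[φ] C2) → ((C3 × C3) ⋊[φ] C2) → ℂˣ}
    (hf : f ∈ twoCocycles ((C3 × C3) ⋊[φ] C2))
    (hB : pairB f (aK φ) (bK φ) = 1) :
    f ∈ twoCoboundaries ((C3 × C3) ⋊[φ] C2) := by
  have hfc := mem_twoCocycles_iff.mp hf
  set c₀ : NormCocycle ((C3 × C3) ⋊[φ] C2) :=
    { f := fun g h => f g h * (f 1 1)⁻¹
      cocycle := by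
        intro g h k
        rw [mul_mul_mul_comm, hfc g h k, mul_mul_mul_comm]
      norm_left := by
        intro g
        rw [cocycle_one_left hf g, mul_inv_cancel]
      norm_right := by
        intro g
        rw [cocycle_one_right hf g, mul_inv_cancel] } with hc₀
  have hB₀ : c₀.f (aK φ) (bK φ) = c₀.f (bK φ) (aK φ) := by
    have h1 : f (aK φ) (bK φ) = f (bK φ) (aK φ) := by
      have := mul_inv_eq_one.mp hB
      exact this
    show f (aK φ) (bK φ) * (f 1 1)⁻¹ = f (bK φ) (aK φ) * (f 1 1)⁻¹
    rw [h1]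
  obtain ⟨ea, heax, hea3, wa, heaw⟩ := exists_lift_pow_eq_one c₀ (by norm_num) (aK_pow3 φ)
  obtain ⟨eb, hebx, heb3, wb, hebw⟩ := exists_lift_pow_eq_one c₀ (by norm_num) (bK_pow3 φ)
  obtain ⟨et, hetx, het2, wt, hetw⟩ := exists_lift_pow_eq_one c₀ (by norm_num) (tK_pow2 φ)
  have hprojinv : ∀ u : CExt c₀, (u⁻¹).x = (u.x)⁻¹ := fun u => map_inv (CExt.proj c₀) u
  have hca : (et * ea * et⁻¹).x = (ea.x)⁻¹ := by
    show (et.x * ea.x * (et⁻¹).x) = _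
    rw [hprojinv, hetx, heax]
    exact tK_conj_aK φ hφ
  have hcb : (et * eb * et⁻¹).x = (eb.x)⁻¹ := by
    show (et.x * eb.x * (et⁻¹).x) = _
    rw [hprojinv, hetx, hebx]
    exact tK_conj_bK φ hφ
  obtain ⟨a2, ha2x, ha23, ha2conj, za, ha2w⟩ := exists_adjust c₀ et ea hea3 hca
  obtain ⟨b2, hb2x, hb23, hb2conj, zb, hb2w⟩ := exists_adjust c₀ et eb heb3 hcb
  -- commutation of the lifts
  have hbase : (⟨1, aK φ⟩ : CExt c₀) * ⟨1, bK φ⟩ = (⟨1, bK φ⟩ : CExt c₀) * ⟨1, aK φ⟩ := by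
    refine CExt.ext ?_ ?_
    · show (1 : ℂˣ) * 1 * c₀.f (aK φ) (bK φ) = 1 * 1 * c₀.f (bK φ) (aK φ)
      rw [hB₀]
    · exact aK_mul_bK φ
  have hcomm : Commute a2 b2 := by
    rw [ha2w, hb2w, heaw, hebw]
    have hAB : Commute (⟨1, aK φ⟩ : CExt c₀) (⟨1, bK φ⟩ : CExt c₀) := hbase
    have h1 : Commute (⟨1, aK φ⟩ : CExt c₀) (CExt.nu c₀ wb * ⟨1, bK φ⟩) :=
      ((CExt.nu_commute wb _).symm).mul_right hAB
    have h2 : Commute (⟨1, aK φ⟩ : CExt c₀) (CExt.nu c₀ zb * (CExt.nu c₀ wb * ⟨1, bK φ⟩)) :=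
      ((CExt.nu_commute zb _).symm).mul_right h1
    have h3 : Commute (CExt.nu c₀ wa * ⟨1, aK φ⟩ : CExt c₀)
        (CExt.nu c₀ zb * (CExt.nu c₀ wb * ⟨1, bK φ⟩)) :=
      (CExt.nu_commute wa _).mul_left h2
    exact (CExt.nu_commute za _).mul_left h3
  obtain ⟨s, hs⟩ := exists_section φ hφ c₀ a2 b2 et (ha2x.trans heax) (hb2x.trans hebx) hetx ha23 hb23 het2
    hcomm ha2conj hb2conj
  refine mem_twoCoboundaries_iff.mpr ⟨fun g => ((s g).u)⁻¹ * f 1 1, fun g h => ?_⟩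
  have hm := s.map_mul g h
  have hu : (s (g * h)).u = (s g).u * (s h).u * (f (s g).x (s h).x * (f 1 1)⁻¹) := by
    rw [hm]; rfl
  rw [hs, hs] at hu
  apply Units.ext
  have hkc := congrArg Units.val hu
  simp only [Units.val_mul, Units.val_inv_eq_inv_val] at hkc ⊢
  field_simp at hkc ⊢
  linear_combination (-1 : ℂ) * hkc

end SMaux
namespace SMaux

/-- sign character `C2 → ZMod 3`. -/
def sgn (ε : C2) : ZMod 3 := if Multiplicative.toAdd ε = 0 then 1 else -1

theorem sgn_mul : ∀ ε δ : C2, sgn (ε * δ) = sgn ε * sgn δ := by decide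
theorem sgn_sq : ∀ ε : C2, sgn ε * sgn ε = 1 := by decide
theorem sgn_one : sgn 1 = 1 := by decide

variable (φ : C2 →* MulAut (C3 × C3))

/-- The additive exponent function of the explicit nontrivial cocycle. -/
def eZ (g h : (C3 × C3) ⋊[φ] C2) : ZMod 3 :=
  sgn g.right * Multiplicative.toAdd g.left.1 * Multiplicative.toAdd h.left.2

theorem toAdd_phi_fst (hφ : ∀ m : C3 × C3, φ (Multiplicative.ofAdd (1 : ZMod 2)) m = m⁻¹)
    (ε : C2) (m : C3 × C3) :
    Multiplicative.toAdd ((φ ε m).1) = sgn ε * Multiplicative.toAdd m.1 := by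
  have hcases : ∀ g : C2, g = 1 ∨ g = Multiplicative.ofAdd 1 := by decide
  rcases hcases ε with rfl | rfl
  · rw [map_one φ, sgn_one, one_mul]; rfl
  · rw [hφ m]
    have h1 : sgn (Multiplicative.ofAdd 1) = -1 := by decide
    rw [h1]
    show Multiplicative.toAdd (m.1⁻¹) = _
    rw [toAdd_inv]
    ring

theorem toAdd_phi_snd (hφ : ∀ m : C3 × C3, φ (Multiplicative.ofAdd (1 : ZMod 2)) m = m⁻¹)
    (ε : C2) (m : C3 × C3) :
    Multiplicative.toAdd ((φ ε m).2) = sgn ε * Multiplicative.toAdd m.2 := by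
  have hcases : ∀ g : C2, g = 1 ∨ g = Multiplicative.ofAdd 1 := by decide
  rcases hcases ε with rfl | rfl
  · rw [map_one φ, sgn_one, one_mul]; rfl
  · rw [hφ m]
    have h1 : sgn (Multiplicative.ofAdd 1) = -1 := by decide
    rw [h1]
    show Multiplicative.toAdd (m.2⁻¹) = _
    rw [toAdd_inv]
    ring

theorem eZ_cocycle (hφ : ∀ m : C3 × C3, φ (Multiplicative.ofAdd (1 : ZMod 2)) m = m⁻¹) :
    ∀ g h k : (C3 × C3) ⋊[φ] C2,
      eZ φ g h + eZ φ (g * h) k = eZ φ g (h * k) + eZ φ h k := by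
  intro g h k
  have h1 : (g * h).right = g.right * h.right := rfl
  have h2 : Multiplicative.toAdd ((g * h).left.1)
      = Multiplicative.toAdd g.left.1 + sgn g.right * Multiplicative.toAdd h.left.1 := by
    have hl : (g * h).left = g.left * φ g.right h.left := rfl
    rw [hl]
    show Multiplicative.toAdd (g.left.1 * (φ g.right h.left).1) = _
    rw [toAdd_mul, toAdd_phi_fst φ hφ]
  have h3 : Multiplicative.toAdd ((h * k).left.2)
      = Multiplicative.toAdd h.left.2 + sgn h.right * Multiplicative.toAdd k.left.2 := by
    have hl : (h * k).left = h.left * φ h.right k.left := rfl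
    rw [hl]
    show Multiplicative.toAdd (h.left.2 * (φ h.right k.left).2) = _
    rw [toAdd_mul, toAdd_phi_snd φ hφ]
  rw [eZ, eZ, eZ, eZ, h1, h2, h3, sgn_mul]
  have hs := sgn_sq g.right
  linear_combination (sgn h.right * Multiplicative.toAdd h.left.1
    * Multiplicative.toAdd k.left.2) * hs

end SMaux
namespace SMaux

noncomputable section

open Complex in
/-- A primitive cube root of unity in `ℂˣ`. -/
def ω3 : ℂˣ :=
  ((Complex.isPrimitiveRoot_exp 3 (by norm_num)).isUnit (by norm_num)).unit

theorem ω3_prim : IsPrimitiveRoot ω3 3 :=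
  (Complex.isPrimitiveRoot_exp 3 (by norm_num)).isUnit_unit (by norm_num)

theorem ω3_pow3 : ω3 ^ 3 = 1 := ω3_prim.pow_eq_one

theorem ω3_orderOf : orderOf ω3 = 3 := ω3_prim.eq_orderOf.symm

variable (φ : C2 →* MulAut (C3 × C3))

/-- The explicit nontrivial 2-cocycle on `(C3 × C3) ⋊ C2`. -/
def Fcoc (g h : (C3 × C3) ⋊[φ] C2) : ℂˣ := ω3 ^ (eZ φ g h).val

theorem pow_zmod_add (x : ℂˣ) (hx : x ^ 3 = 1) (a b : ZMod 3) :
    x ^ (a + b).val = x ^ a.val * x ^ b.val :=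
  (homOfPowEq 3 x hx).map_mul (Multiplicative.ofAdd a) (Multiplicative.ofAdd b)

theorem Fcoc_mem (hφ : ∀ m : C3 × C3, φ (Multiplicative.ofAdd (1 : ZMod 2)) m = m⁻¹) :
    Fcoc φ ∈ twoCocycles ((C3 × C3) ⋊[φ] C2) := by
  refine mem_twoCocycles_iff.mpr fun g h k => ?_
  show ω3 ^ (eZ φ g h).val * ω3 ^ (eZ φ (g*h) k).val
    = ω3 ^ (eZ φ g (h*k)).val * ω3 ^ (eZ φ h k).val
  rw [← pow_zmod_add ω3 ω3_pow3, ← pow_zmod_add ω3 ω3_pow3, eZ_cocycle φ hφ g h k]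

theorem Fcoc_pairB : pairB (Fcoc φ) (aK φ) (bK φ) = ω3 := by
  have h1 : eZ φ (aK φ) (bK φ) = 1 := rfl
  have h2 : eZ φ (bK φ) (aK φ) = 0 := rfl
  rw [pairB, Fcoc, Fcoc, h1, h2]
  show ω3 ^ (1 : ZMod 3).val * (ω3 ^ (0 : ZMod 3).val)⁻¹ = ω3
  have hv1 : (1 : ZMod 3).val = 1 := rfl
  have hv0 : (0 : ZMod 3).val = 0 := rfl
  rw [hv1, hv0, pow_one, pow_zero, inv_one, mul_one]

/-- The pairing homomorphism on cocycles. -/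
def Phi : (twoCocycles ((C3 × C3) ⋊[φ] C2)) →* ℂˣ where
  toFun f := pairB f.val (aK φ) (bK φ)
  map_one' := by simp [pairB]
  map_mul' f g := by
    show pairB (f.val * g.val) _ _ = _
    simp only [pairB, Pi.mul_apply, mul_inv]
    simp [mul_comm, mul_left_comm, mul_assoc]

theorem Phi_ker (f : twoCocycles ((C3 × C3) ⋊[φ] C2))
    (hf : f ∈ (twoCoboundaries ((C3 × C3) ⋊[φ] C2)).subgroupOf
      (twoCocycles ((C3 × C3) ⋊[φ] C2))) : Phi φ f = 1 :=
  pairB_coboundary (Subgroup.mem_subgroupOf.mp hf) (aK_mul_bK φ)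

/-- The pairing homomorphism on the Schur multiplier. -/
def Psi : schurMultiplier ((C3 × C3) ⋊[φ] C2) →* ℂˣ :=
  QuotientGroup.lift _ (Phi φ) (Phi_ker φ)

theorem Psi_cube (q : schurMultiplier ((C3 × C3) ⋊[φ] C2)) : Psi φ q ^ 3 = 1 := by
  induction q using QuotientGroup.induction_on with
  | H f =>
    show pairB f.val (aK φ) (bK φ) ^ 3 = 1
    rw [← pairB_pow_right f.prop (aK_mul_bK φ) 3, bK_pow3 φ, pairB_one_right f.prop]

theorem Psi_inj (hφ : ∀ m : C3 × C3, φ (Multiplicative.ofAdd (1 : ZMod 2)) m = m⁻¹) :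
    Function.Injective (Psi φ) := by
  refine (injective_iff_map_eq_one (Psi φ)).mpr fun q hq => ?_
  induction q using QuotientGroup.induction_on with
  | H f =>
    have h1 : pairB f.val (aK φ) (bK φ) = 1 := hq
    have h2 : f.val ∈ twoCoboundaries ((C3 × C3) ⋊[φ] C2) :=
      coboundary_of_pair_trivial φ hφ f.prop h1
    exact (QuotientGroup.eq_one_iff f).mpr (Subgroup.mem_subgroupOf.mpr h2)

/-- The restricted pairing homomorphism into cube roots of unity. -/
def Psi' : schurMultiplier ((C3 × C3) ⋊[φ] C2) →* (rootsOfUnity 3 ℂ) :=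
  (Psi φ).codRestrict _ fun q => (mem_rootsOfUnity 3 _).mpr (Psi_cube φ q)

theorem Psi'_bij (hφ : ∀ m : C3 × C3, φ (Multiplicative.ofAdd (1 : ZMod 2)) m = m⁻¹) :
    Function.Bijective (Psi' φ) := by
  constructor
  · intro x y hxy
    apply Psi_inj φ hφ
    exact congrArg Subtype.val hxy
  · -- surjectivity via the explicit cocycle
    set ζ0 : rootsOfUnity 3 ℂ := ⟨ω3, (mem_rootsOfUnity 3 _).mpr ω3_pow3⟩ with hζ0
    have hord : orderOf ζ0 = 3 := by
      have h1 := orderOf_injective (rootsOfUnity 3 ℂ).subtype Subtype.coe_injective ζ0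
      rw [← h1]
      exact ω3_orderOf
    have htop : Subgroup.zpowers ζ0 = ⊤ := by
      apply Subgroup.eq_top_of_card_eq
      rw [Nat.card_zpowers, hord, Complex.card_rootsOfUnity]
    have hF : Psi' φ (QuotientGroup.mk ⟨Fcoc φ, Fcoc_mem φ hφ⟩) = ζ0 := by
      apply Subtype.ext
      show Psi φ (QuotientGroup.mk ⟨Fcoc φ, Fcoc_mem φ hφ⟩) = ω3
      show pairB (Fcoc φ) (aK φ) (bK φ) = ω3
      exact Fcoc_pairB φ
    intro y
    have hy : y ∈ Subgroup.zpowers ζ0 := htop ▸ Subgroup.mem_top y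
    obtain ⟨k, hk⟩ := hy
    exact ⟨_, (map_zpow (Psi' φ) (QuotientGroup.mk ⟨Fcoc φ, Fcoc_mem φ hφ⟩) k).trans ((congrArg (· ^ k) hF).trans hk)⟩

theorem card_schur_K (hφ : ∀ m : C3 × C3, φ (Multiplicative.ofAdd (1 : ZMod 2)) m = m⁻¹) :
    Nat.card (schurMultiplier ((C3 × C3) ⋊[φ] C2)) = 3 := by
  have e1 := MulEquiv.ofBijective (Psi' φ) (Psi'_bij φ hφ)
  rw [Nat.card_congr e1.toEquiv, Complex.card_rootsOfUnity]

end

end SMaux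
namespace SMaux

variable {G H : Type*} [Group G] [Group H]

/-- Pullback of a 2-form along an isomorphism. -/
def pullFun (e : G ≃* H) (f : H → H → ℂˣ) : G → G → ℂˣ := fun g h => f (e g) (e h)

theorem pull_mem_cocycles (e : G ≃* H) {f : H → H → ℂˣ} (hf : f ∈ twoCocycles H) :
    pullFun e f ∈ twoCocycles G := by
  refine mem_twoCocycles_iff.mpr fun g h k => ?_
  show f (e g) (e h) * f (e (g * h)) (e k) = f (e g) (e (h * k)) * f (e h) (e k)
  rw [map_mul, map_mul]
  exact mem_twoCocycles_iff.mp hf (e g) (e h) (e k)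

theorem pull_mem_coboundaries (e : G ≃* H) {f : H → H → ℂˣ} (hf : f ∈ twoCoboundaries H) :
    pullFun e f ∈ twoCoboundaries G := by
  obtain ⟨c, hc⟩ := hf
  refine mem_twoCoboundaries_iff.mpr ⟨fun g => c (e g), fun g h => ?_⟩
  show f (e g) (e h) = c (e g) * c (e h) * (c (e (g * h)))⁻¹
  rw [hc (e g) (e h), map_mul]

theorem pull_mem_coboundaries_iff (e : G ≃* H) (f : H → H → ℂˣ) :
    pullFun e f ∈ twoCoboundaries G ↔ f ∈ twoCoboundaries H := by
  constructor
  · intro hf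
    obtain ⟨c, hc⟩ := hf
    refine mem_twoCoboundaries_iff.mpr ⟨fun x => c (e.symm x), fun x y => ?_⟩
    have h1 := hc (e.symm x) (e.symm y)
    have h2 : pullFun e f (e.symm x) (e.symm y) = f x y := by
      rw [pullFun, e.apply_symm_apply, e.apply_symm_apply]
    rw [h2] at h1
    rw [h1, ← map_mul]
  · exact pull_mem_coboundaries e

/-- Pullback as an isomorphism of cocycle groups. -/
def cocyclesPullEquiv (e : G ≃* H) : (twoCocycles H) ≃* (twoCocycles G) where
  toFun f := ⟨pullFun e f.val, pull_mem_cocycles e f.prop⟩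
  invFun f := ⟨pullFun e.symm f.val, pull_mem_cocycles e.symm f.prop⟩
  left_inv f := by
    apply Subtype.ext
    funext g h
    show f.val (e (e.symm g)) (e (e.symm h)) = f.val g h
    rw [e.apply_symm_apply, e.apply_symm_apply]
  right_inv f := by
    apply Subtype.ext
    funext g h
    show f.val (e.symm (e g)) (e.symm (e h)) = f.val g h
    rw [e.symm_apply_apply, e.symm_apply_apply]
  map_mul' f g := rfl

theorem cocyclesPullEquiv_map (e : G ≃* H) :
    ((twoCoboundaries H).subgroupOf (twoCocycles H)).map
        (cocyclesPullEquiv e).toMonoidHom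
      = (twoCoboundaries G).subgroupOf (twoCocycles G) := by
  ext x
  rw [Subgroup.mem_map_equiv]
  rw [Subgroup.mem_subgroupOf, Subgroup.mem_subgroupOf]
  show pullFun e.symm x.val ∈ twoCoboundaries H ↔ (x.val ∈ twoCoboundaries G)
  exact pull_mem_coboundaries_iff e.symm x.val

/-- Transport of Schur multipliers along an isomorphism. -/
noncomputable def schurPullEquiv (e : G ≃* H) : schurMultiplier H ≃* schurMultiplier G :=
  QuotientGroup.congr _ _ (cocyclesPullEquiv e) (cocyclesPullEquiv_map e)

end SMaux

theorem schurMultiplier_of_G18 (G : Type*) [Group G]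
    (hcard : Nat.card G = 18) (hnonab : ∃ x y : G, x * y ≠ y * x)
    (φ : C2 →* MulAut (C3 × C3))
    (hφ : ∀ m : C3 × C3, φ (Multiplicative.ofAdd (1 : ZMod 2)) m = m⁻¹)
    (hiso : Nonempty (G ≃* (C3 × C3) ⋊[φ] C2)) :
    Nonempty (schurMultiplier G ≃* Multiplicative (ZMod 3)) := by
  obtain ⟨e⟩ := hiso
  have hcard3 : Nat.card (schurMultiplier G) = 3 := by
    have e2 := SMaux.schurPullEquiv e
    rw [← Nat.card_congr e2.toEquiv]
    exact SMaux.card_schur_K φ hφ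
  haveI : Fact (Nat.Prime 3) := ⟨by norm_num⟩
  have hcardC3 : Nat.card (Multiplicative (ZMod 3)) = 3 := by
    rw [Nat.card_eq_fintype_card]
    rfl
  exact ⟨mulEquivOfPrimeCardEq hcard3 hcardC3⟩
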